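/- With λ, Δ, S, C, a, b, g̃ as defined, for every t ∈ (0, Δ) the steady-state balance equation holds: C·exp(λt/2) = (1/2)·[ λ·exp(λt)·( ∫_t^Δ C·exp(λτ/2)·exp(−λτ) dτ + b·exp(−λΔ) ) + λ·exp(λ(t−Δ))·( a + ∫_0^Δ C·exp(λτ/2)·exp(−λτ) dτ + b·exp(−λΔ) ) ]. (This is the steady-state relation g̃(t) = ½[∫_{Δ−t}^∞ g(t+x−Δ)·λe^{−λx} dx + ∫_0^∞ g(t+x)·λe^{−λx} dx] from the proof of Proposition 1, written out explicitly for g = g̃ + a·δ_0 + b·δ_Δ.) -/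

import Mathlib

open Real Set MeasureTheory intervalIntegral

set_option maxHeartbeats 1000000

lemma integral_exp_mul' (c p q : ℝ) (hc : c ≠ 0) :
    ∫ τ in p..q, Real.exp (c * τ) = (Real.exp (c * q) - Real.exp (c * p)) / c := by
  rw [intervalIntegral.integral_comp_mul_left Real.exp hc, integral_exp, smul_eq_mul]
  field_simp

/-- Steady-state balance equation for the continuous part `g̃` of the
half-distribution `g = g̃ + a·δ₀ + b·δ_Δ` under the flexible-order policy
(Proposition 1 of the paper), written out explicitly for every `t ∈ (0, Δ)`. -/
theorem steady_state_balance
    (lam Δ S C a b : ℝ) (hlam : 0 < lam) (hΔ : 0 < Δ)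
    (hS : S = Real.exp (lam * Δ / 2) + Real.exp (-(lam * Δ) / 2) - 1)
    (hC : C = lam * (1 + Real.exp (-(lam * Δ))) / (8 * S))
    (ha : a = 2 * C / lam)
    (hb : b = 1 / 2 - (2 * Real.exp (lam * Δ / 2) / lam) * C) :
    ∀ t ∈ Set.Ioo (0 : ℝ) Δ,
      C * Real.exp (lam * t / 2) =
        (1 / 2) *
          ( lam * Real.exp (lam * t) *
              ((∫ τ in t..Δ, C * Real.exp (lam * τ / 2) * Real.exp (-(lam * τ))) +
                b * Real.exp (-(lam * Δ)))
          + lam * Real.exp (lam * (t - Δ)) *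
              (a + (∫ τ in (0 : ℝ)..Δ, C * Real.exp (lam * τ / 2) * Real.exp (-(lam * τ))) +
                b * Real.exp (-(lam * Δ))) ) := by
  intro t ht
  have hlam' : lam ≠ 0 := ne_of_gt hlam
  have hc2 : (-(lam / 2)) ≠ 0 := by
    simp only [ne_eq, neg_eq_zero, div_eq_zero_iff]
    push_neg
    exact ⟨hlam', by norm_num⟩
  -- compute the integrals
  have hint : ∀ p q : ℝ,
      (∫ τ in p..q, C * Real.exp (lam * τ / 2) * Real.exp (-(lam * τ)))
        = C * ((Real.exp (-(lam / 2) * q) - Real.exp (-(lam / 2) * p)) / (-(lam / 2))) := by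
    intro p q
    have heq : ∀ τ : ℝ, C * Real.exp (lam * τ / 2) * Real.exp (-(lam * τ))
        = C * Real.exp (-(lam / 2) * τ) := by
      intro τ
      rw [mul_assoc, ← Real.exp_add]
      ring_nf
    simp_rw [heq]
    rw [intervalIntegral.integral_const_mul, integral_exp_mul' _ _ _ hc2]
  rw [hint, hint]
  -- abbreviations
  set u := Real.exp (lam * t / 2) with hu
  set v := Real.exp (lam * Δ / 2) with hvdef
  have hupos : 0 < u := Real.exp_pos _
  have hvpos : 0 < v := Real.exp_pos _
  -- exponential identities
  have e1 : Real.exp (lam * t) = u * u := by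
    rw [hu, ← Real.exp_add]; ring_nf
  have e2 : Real.exp (lam * (t - Δ)) = u * u * (v * v)⁻¹ := by
    rw [hu, hvdef, ← Real.exp_add, ← Real.exp_add, ← Real.exp_neg, ← Real.exp_add]; ring_nf
  have e3 : Real.exp (-(lam * Δ)) = (v * v)⁻¹ := by
    rw [hvdef, ← Real.exp_add, ← Real.exp_neg]; ring_nf
  have e4 : Real.exp (-(lam / 2) * t) = u⁻¹ := by
    rw [hu, ← Real.exp_neg]; ring_nf
  have e5 : Real.exp (-(lam / 2) * Δ) = v⁻¹ := by
    rw [hvdef, ← Real.exp_neg]; ring_nf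
  have e6 : Real.exp (-(lam / 2) * 0) = 1 := by
    norm_num
  have e7 : Real.exp (-(lam * Δ) / 2) = v⁻¹ := by
    rw [hvdef, ← Real.exp_neg]; ring_nf
  rw [e7] at hS
  rw [e3] at hC
  have hvv : v * v⁻¹ = 1 := mul_inv_cancel₀ hvpos.ne'
  have hSpos : 0 < S := by
    rw [hS]
    nlinarith [sq_nonneg (v - 1), hvpos]
  have hSne : v + v⁻¹ - 1 ≠ 0 := by rw [← hS]; exact hSpos.ne'
  have hq : v * v - v + 1 ≠ 0 := by nlinarith [sq_nonneg (v - 1), hvpos]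
  have hCval : C = lam * (v * v + 1) / (8 * v * (v * v - v + 1)) := by
    rw [hC, hS]
    have h1 : (8 : ℝ) * (v + v⁻¹ - 1) ≠ 0 := by
      have : (0:ℝ) < v + v⁻¹ - 1 := by nlinarith [sq_nonneg (v - 1), hvpos, hvv]
      positivity
    have h2 : (8 : ℝ) * v * (v * v - v + 1) ≠ 0 := by
      have : (0:ℝ) < v * v - v + 1 := by nlinarith [sq_nonneg (v - 1), hvpos]
      positivity
    rw [div_eq_div_iff h1 h2]
    field_simp
    ring
  rw [e1, e2, e3, e4, e5, e6]
  subst ha hb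
  rw [hCval]
  have hq' : v * (v - 1) + 1 ≠ 0 := by nlinarith [sq_nonneg (v - 1), hvpos]
  field_simp
  ring
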